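/- Let q be an integer with 3 ≤ q, let p be a prime with p > 5 and q ≤ p, and let r be a power of p with r ≥ 7. Then for any composition [ω₀, ω₁, …, ω_{q−1}] of r, there exists a q-ary constant-composition code C of length r with composition [ω₀, ω₁, …, ω_{q−1}] whose minimum distance is at least 6 and whose size M satisfies M · r⁴ ≥ r!/(ω₀!·ω₁!⋯ω_{q−1}!). -/

import Mathlib

open Finset

lemma fiber_card {q r : ℕ} (ω : Fin q → ℕ) (e₀ : (Σ a : Fin q, Fin (ω a)) ≃ Fin r) (a : Fin q) :
    (univ.filter fun i : Fin r => (e₀.symm i).1 = a).card = ω a := by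
  rw [← Fintype.card_subtype]
  have e1 : {x : Σ b : Fin q, Fin (ω b) // x.1 = a} ≃ {i : Fin r // (e₀.symm i).1 = a} :=
    Equiv.subtypeEquiv e₀ (by intro x; simp)
  rw [← Fintype.card_congr e1, Fintype.card_subtype, Finset.card_filter,
    ← Finset.univ_sigma_univ, Finset.sum_sigma]
  simp [apply_ite Finset.card, Finset.sum_ite_eq' univ a]

lemma exists_perm {q r : ℕ} (c₀ c : Fin r → Fin q)
    (h : ∀ a, (univ.filter fun i => c i = a).card = (univ.filter fun i => c₀ i = a).card) :
    ∃ σ : Equiv.Perm (Fin r), c₀ ∘ σ = c := by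
  have ea : ∀ a, {i // c i = a} ≃ {i // c₀ i = a} := fun a =>
    Fintype.equivOfCardEq (by rw [Fintype.card_subtype, Fintype.card_subtype, h a])
  refine ⟨(Equiv.sigmaFiberEquiv c).symm.trans
    ((Equiv.sigmaCongrRight ea).trans (Equiv.sigmaFiberEquiv c₀)), funext fun x => ?_⟩
  simp only [Function.comp_apply, Equiv.trans_apply, Equiv.sigmaCongrRight_apply]
  have : (Equiv.sigmaFiberEquiv c).symm x = ⟨c x, x, rfl⟩ := rfl
  rw [this]
  exact (ea (c x) ⟨x, rfl⟩).2

lemma perm_fiber_card {q r : ℕ} (c₀ : Fin r → Fin q) (σ : Equiv.Perm (Fin r)) (a : Fin q) :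
    (univ.filter fun i => c₀ (σ i) = a).card = (univ.filter fun i => c₀ i = a).card := by
  apply Finset.card_nbij' (fun i => σ i) (fun j => σ.symm j) <;> simp [Set.MapsTo, Set.LeftInvOn, Set.RightInvOn]

lemma count_words {q r : ℕ} (ω : Fin q → ℕ) (hω : ∑ a, ω a = r) :
    (univ.filter fun c : Fin r → Fin q =>
        ∀ a, (univ.filter fun i => c i = a).card = ω a).card
      = Nat.multinomial univ ω := by
  obtain ⟨e₀⟩ : Nonempty ((Σ a : Fin q, Fin (ω a)) ≃ Fin r) :=
    ⟨Fintype.equivOfCardEq (by simp [hω])⟩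
  set c₀ : Fin r → Fin q := fun i => (e₀.symm i).1 with hc₀def
  have hc₀ : ∀ a, (univ.filter fun i => c₀ i = a).card = ω a := fiber_card ω e₀
  set S := univ.filter fun c : Fin r → Fin q =>
    ∀ a, (univ.filter fun i => c i = a).card = ω a with hS
  have hmem : ∀ σ : Equiv.Perm (Fin r), c₀ ∘ σ ∈ S := by
    intro σ
    simp only [hS, mem_filter, mem_univ, true_and]
    intro a
    rw [← hc₀ a]
    exact perm_fiber_card c₀ σ a
  have key : (univ : Finset (Equiv.Perm (Fin r))).card
      = ∑ c ∈ S, (univ.filter fun σ : Equiv.Perm (Fin r) => c₀ ∘ σ = c).card :=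
    Finset.card_eq_sum_card_fiberwise (fun σ _ => hmem σ)
  have fib : ∀ c ∈ S, (univ.filter fun σ : Equiv.Perm (Fin r) => c₀ ∘ σ = c).card
      = ∏ a, (ω a).factorial := by
    intro c hc
    simp only [hS, mem_filter] at hc
    obtain ⟨σc, hσc⟩ := exists_perm c₀ c (fun a => by rw [hc.2 a, hc₀ a])
    have e2 : {σ : Equiv.Perm (Fin r) // c₀ ∘ σ = c} ≃ {g : Equiv.Perm (Fin r) // c₀ ∘ g = c₀} := by
      refine Equiv.subtypeEquiv (Equiv.mulRight σc⁻¹) (fun σ => ?_)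
      constructor
      · intro h
        funext x
        calc c₀ ((Equiv.mulRight σc⁻¹ σ) x) = c₀ (σ (σc⁻¹ x)) := rfl
        _ = c (σc⁻¹ x) := congrFun h _
        _ = c₀ (σc (σc⁻¹ x)) := (congrFun hσc _).symm
        _ = c₀ x := by simp
      · intro h
        funext x
        calc c₀ (σ x) = c₀ (σ (σc⁻¹ (σc x))) := by simp
        _ = c₀ ((Equiv.mulRight σc⁻¹ σ) (σc x)) := rfl
        _ = c₀ (σc x) := congrFun h (σc x)
        _ = c x := congrFun hσc x
    rw [← Fintype.card_subtype, Fintype.card_congr e2, DomMulAct.stabilizer_card]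
    exact Finset.prod_congr rfl fun a _ => by rw [Fintype.card_subtype, hc₀ a]
  have total : r.factorial = S.card * ∏ a, (ω a).factorial := by
    have hcard : (univ : Finset (Equiv.Perm (Fin r))).card = r.factorial := by
      simp [Finset.card_univ, Fintype.card_perm]
    rw [← hcard, key, Finset.sum_congr rfl fib, Finset.sum_const, smul_eq_mul]
  have spec := Nat.multinomial_spec univ ω
  rw [hω] at spec
  have hpos : 0 < ∏ a, (ω a).factorial := Finset.prod_pos fun a _ => Nat.factorial_pos _
  apply Nat.eq_of_mul_eq_mul_right hpos
  rw [← total, ← spec, mul_comm]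

/-- Let `q` be an integer with `3 ≤ q`, `p` a prime with `p > 5` and
`q ≤ p`, and `r` a power of `p` with `r ≥ 7`. For any composition `ω` of `r`, there is a
`q`-ary constant-composition code of length `r` with composition `ω`, minimum distance at
least `6`, and size `M` with `M · r⁴ ≥ r!/(ω₀!⋯ω_{q-1}!)`. -/
theorem stmt_6 (q p r : ℕ) (hq : 3 ≤ q) (hp : p.Prime) (hp5 : 5 < p) (hpq : q ≤ p)
    (hr : ∃ k : ℕ, 0 < k ∧ r = p ^ k) (hr7 : 7 ≤ r)
    (ω : Fin q → ℕ) (hω : ∑ a, ω a = r) :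
    ∃ C : Finset (Fin r → Fin q),
      (∀ c ∈ C, ∀ a : Fin q, (Finset.univ.filter (fun i => c i = a)).card = ω a) ∧
      (∀ u ∈ C, ∀ v ∈ C, u ≠ v → 6 ≤ hammingDist u v) ∧
      Nat.multinomial Finset.univ ω ≤ C.card * r ^ 4 := by
  classical
  obtain ⟨k, hk, hrk⟩ := hr
  haveI : Fact p.Prime := ⟨hp⟩
  set F := GaloisField p k with hF
  haveI : Fintype F := Fintype.ofFinite F
  have hcF : Fintype.card F = r := by
    rw [← Nat.card_eq_fintype_card, GaloisField.card p k hk.ne', hrk]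
  have hcharF : CharP F p := by
    exact charP_of_injective_algebraMap (algebraMap (ZMod p) F).injective p
  obtain ⟨e⟩ : Nonempty (Fin r ≃ F) := ⟨Fintype.equivOfCardEq (by simp [hcF])⟩
  set φ : (Fin r → Fin q) → (Fin 4 → F) :=
    fun c j => ∑ i, ((c i : ℕ) : F) * (e i) ^ ((j : ℕ) + 1) with hφ
  set S := univ.filter fun c : Fin r → Fin q =>
    ∀ a, (univ.filter fun i => c i = a).card = ω a with hS
  have hScard : S.card = Nat.multinomial univ ω := count_words ω hω
  obtain ⟨y₀, -, hy₀⟩ := Finset.exists_max_image (univ : Finset (Fin 4 → F))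
    (fun y => (S.filter fun c => φ c = y).card) univ_nonempty
  refine ⟨S.filter fun c => φ c = y₀, ?_, ?_, ?_⟩
  · intro c hc a
    exact ((mem_filter.1 (mem_filter.1 hc).1).2) a
  · -- distance
    intro u hu v hv huv
    by_contra h6
    push_neg at h6
    have hu' := mem_filter.1 hu
    have hv' := mem_filter.1 hv
    have hcu : ∀ a, (univ.filter fun i => u i = a).card = ω a := (mem_filter.1 hu'.1).2
    have hcv : ∀ a, (univ.filter fun i => v i = a).card = ω a := (mem_filter.1 hv'.1).2
    have hφuv : φ u = φ v := hu'.2.trans hv'.2.symm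
    set D : Finset (Fin r) := univ.filter fun i => u i ≠ v i with hD
    have hDcard : D.card = hammingDist u v := rfl
    have ht5 : D.card ≤ 5 := by omega
    have htpos : 0 < D.card := by
      rcases Nat.eq_zero_or_pos D.card with h | h
      · exact absurd (by rwa [hDcard, hammingDist_eq_zero] at h) huv
      · exact h
    set d : Fin r → F := fun i => ((u i : ℕ) : F) - ((v i : ℕ) : F) with hd
    have hd0 : ∀ i ∉ D, d i = 0 := by
      intro i hi
      simp only [hD, mem_filter, mem_univ, true_and, not_not] at hi
      simp [hd, hi]
    have hdne : ∀ i ∈ D, d i ≠ 0 := by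
      intro i hi hzero
      have : ((u i : ℕ) : F) = ((v i : ℕ) : F) := by
        rwa [hd, sub_eq_zero] at hzero
      rw [CharP.natCast_eq_natCast F p] at this
      have h1 : (u i : ℕ) < p := lt_of_lt_of_le (u i).2 hpq
      have h2 : (v i : ℕ) < p := lt_of_lt_of_le (v i).2 hpq
      have : (u i : ℕ) = (v i : ℕ) := by
        rwa [Nat.ModEq, Nat.mod_eq_of_lt h1, Nat.mod_eq_of_lt h2] at this
      exact (mem_filter.1 hi).2 (Fin.ext this)
    -- composition sum
    have comp_sum : ∀ c : Fin r → Fin q, (∀ a, (univ.filter fun i => c i = a).card = ω a) →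
        ∑ i, ((c i : ℕ) : F) = ∑ a : Fin q, (ω a : F) * ((a : ℕ) : F) := by
      intro c hcc
      rw [← Finset.sum_fiberwise_of_maps_to (fun i _ => mem_univ (c i))
        (fun i => ((c i : ℕ) : F))]
      refine Finset.sum_congr rfl fun a _ => ?_
      calc ∑ i ∈ univ.filter (fun i => c i = a), ((c i : ℕ) : F)
          = ∑ _i ∈ univ.filter (fun i => c i = a), ((a : ℕ) : F) :=
            Finset.sum_congr rfl (fun i hi => by rw [(mem_filter.1 hi).2])
        _ = (ω a : F) * ((a : ℕ) : F) := by rw [Finset.sum_const, hcc a, nsmul_eq_mul]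
    have hsum : ∀ j : ℕ, j ≤ 4 → ∑ i ∈ D, d i * (e i) ^ j = 0 := by
      intro j hj
      have hext : ∑ i ∈ D, d i * (e i) ^ j = ∑ i : Fin r, d i * (e i) ^ j :=
        Finset.sum_subset (Finset.subset_univ D)
          (fun i _ hi => by rw [hd0 i hi, zero_mul])
      rw [hext]
      have hsplit : ∑ i : Fin r, d i * (e i) ^ j
          = (∑ i, ((u i : ℕ) : F) * (e i) ^ j) - ∑ i, ((v i : ℕ) : F) * (e i) ^ j := by
        rw [← Finset.sum_sub_distrib]
        exact Finset.sum_congr rfl fun i _ => by rw [hd, sub_mul]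
      rw [hsplit, sub_eq_zero]
      interval_cases j
      · simpa using (comp_sum u hcu).trans (comp_sum v hcv).symm
      · simpa [hφ] using congrFun hφuv 0
      · simpa [hφ] using congrFun hφuv 1
      · simpa [hφ] using congrFun hφuv 2
      · simpa [hφ] using congrFun hφuv 3
    -- Vandermonde
    set ι : Fin D.card ≃o {i // i ∈ D} := D.orderIsoOfFin rfl with hι
    set w : Fin D.card → F := fun l => d (ι l) with hw
    have hfinj : Function.Injective (fun l : Fin D.card => e (ι l)) := by
      intro a b hab
      exact ι.injective (Subtype.ext (e.injective hab))
    have hw0 : w = 0 := by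
      refine Matrix.eq_zero_of_forall_pow_sum_mul_pow_eq_zero hfinj fun i => ?_
      have : ∑ l : Fin D.card, w l * (e (ι l)) ^ (i : ℕ) = ∑ x ∈ D, d x * (e x) ^ (i : ℕ) := by
        rw [← Finset.sum_coe_sort D (fun x => d x * (e x) ^ (i : ℕ))]
        exact (Equiv.sum_comp ι.toEquiv (fun x : {i // i ∈ D} => d x * (e x) ^ (i : ℕ)))
      rw [this]
      exact hsum (i : ℕ) (by omega)
    have : w ⟨0, htpos⟩ ≠ 0 := hdne _ (ι ⟨0, htpos⟩).2
    rw [hw0] at this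
    exact this rfl
  · -- size
    have hmaps : ∀ c ∈ S, φ c ∈ (univ : Finset (Fin 4 → F)) := fun c _ => mem_univ _
    have := Finset.card_eq_sum_card_fiberwise hmaps
    have hle : S.card ≤ (univ : Finset (Fin 4 → F)).card *
        (S.filter fun c => φ c = y₀).card := by
      rw [this]
      calc ∑ y ∈ (univ : Finset (Fin 4 → F)), (S.filter fun c => φ c = y).card
          ≤ ∑ _y ∈ (univ : Finset (Fin 4 → F)), (S.filter fun c => φ c = y₀).card :=
            Finset.sum_le_sum fun y _ => hy₀ y (mem_univ y)
        _ = _ := by rw [Finset.sum_const, smul_eq_mul]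
    rw [← hScard]
    calc S.card ≤ (univ : Finset (Fin 4 → F)).card * (S.filter fun c => φ c = y₀).card := hle
      _ = (S.filter fun c => φ c = y₀).card * r ^ 4 := by
        rw [Finset.card_univ, Fintype.card_fun, hcF, Fintype.card_fin, mul_comm]
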